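/- Let q > 1 be a real number and N ≥ 1 an integer. Then the polynomial identity ∑_{k=0}^{N-1} (-1)^k (-q)^{-k(k-1)/2} · ∏_{l=1, l ≠ N-k}^{N}(1 - (-q)^{-l} X) / [ ∏_{l=1}^{N-k-1}(1 - (-q)^{-l}) · ∏_{l=1}^{k}(1 - (-q)^{-l}) ] = (-1)^{N-1} (-q)^{-N(N-1)/2} X^{N-1} holds in ℝ[X] (equivalently for all real X). -/

import Mathlib

open Finset

private lemma auxHalf (a : ℤ) : 2 * (a * (a - 1) / 2) = a * (a - 1) := by
  have h : (2:ℤ) ∣ a * (a - 1) := by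
    have := Int.even_mul_succ_self (a - 1)
    rw [show a - 1 + 1 = a from by ring] at this
    exact Even.two_dvd (by rwa [mul_comm] at this)
  exact Int.mul_ediv_cancel' h

private lemma auxOne {t : ℝ} (ht : t < -1) : ∀ j : ℤ, j ≠ 0 → t ^ j ≠ 1 := by
  intro j hj h
  have habs : (1:ℝ) < |t| := by rw [abs_of_neg (by linarith)]; linarith
  have h2 : |t| ^ j = 1 := by
    rw [show |t| ^ j = |t ^ j| from (map_zpow₀ absHom t j).symm, h, abs_one]
  exact hj (zpow_right_injective₀ (by positivity) habs.ne' (h2.trans (zpow_zero |t|).symm))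

private lemma auxEval {t : ℝ} (ht : t < -1) (N m : ℕ) (hm1 : 1 ≤ m) (hmN : m ≤ N) :
    ∑ k ∈ Finset.range N,
        (-1 : ℝ) ^ k * t ^ (-((k : ℤ) * ((k : ℤ) - 1) / 2)) *
          (∏ l ∈ (Finset.Icc 1 N).erase (N - k), (1 - t ^ (-(l : ℤ)) * t ^ (m : ℤ))) /
          ((∏ l ∈ Finset.Icc 1 (N - k - 1), (1 - t ^ (-(l : ℤ)))) *
            (∏ l ∈ Finset.Icc 1 k, (1 - t ^ (-(l : ℤ)))))
      = (-1 : ℝ) ^ (N - 1) * t ^ (-((N : ℤ) * ((N : ℤ) - 1) / 2)) * (t ^ (m : ℤ)) ^ (N - 1) := by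
  have ht0 : t ≠ 0 := by intro h; rw [h] at ht; linarith
  have hfac : ∀ j : ℤ, j ≠ 0 → (1:ℝ) - t ^ j ≠ 0 := by
    intro j hj h
    exact auxOne ht j hj (by linarith)
  have hD : ∀ n : ℕ, (∏ l ∈ Finset.Icc 1 n, ((1:ℝ) - t ^ (-(l : ℤ)))) ≠ 0 := by
    intro n
    refine Finset.prod_ne_zero_iff.mpr ?_
    intro l hl
    rw [mem_Icc] at hl
    exact hfac _ (by omega)
  rw [Finset.sum_eq_single_of_mem (N - m) (by rw [mem_range]; omega)]
  · -- main term
    have hNk : N - (N - m) = m := by omega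
    rw [hNk]
    have hsplit : (Finset.Icc 1 N).erase m = Finset.Icc 1 (m-1) ∪ Finset.Icc (m+1) N := by
      ext x; simp only [mem_erase, mem_Icc, mem_union]; omega
    have hdisj : Disjoint (Finset.Icc 1 (m-1)) (Finset.Icc (m+1) N) := by
      rw [Finset.disjoint_left]; intro a ha hb
      rw [mem_Icc] at ha hb; omega
    rw [hsplit, Finset.prod_union hdisj]
    have hP2 : ∏ l ∈ Finset.Icc (m+1) N, ((1:ℝ) - t ^ (-(l:ℤ)) * t ^ (m:ℤ))
        = ∏ l ∈ Finset.Icc 1 (N - m), ((1:ℝ) - t ^ (-(l:ℤ))) := by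
      refine Finset.prod_nbij' (fun l => l - m) (fun l => l + m) ?_ ?_ ?_ ?_ ?_ <;>
        intro a ha <;> simp only [mem_Icc] at * <;> try omega
      rw [← zpow_add₀ ht0]
      congr 2
      push_cast [Nat.cast_sub (by omega : m ≤ a)]
      ring
    have hP1 : ∏ l ∈ Finset.Icc 1 (m-1), ((1:ℝ) - t ^ (-(l:ℤ)) * t ^ (m:ℤ))
        = ∏ j ∈ Finset.Icc 1 (m-1), (-(t ^ j) * ((1:ℝ) - t ^ (-(j:ℤ)))) := by
      refine Finset.prod_nbij' (fun l => m - l) (fun l => m - l) ?_ ?_ ?_ ?_ ?_ <;>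
        intro a ha <;> simp only [mem_Icc] at * <;> try omega
      have hcast : ((m - a : ℕ) : ℤ) = (m : ℤ) - a := by
        push_cast [Nat.cast_sub (by omega : a ≤ m)]; ring
      rw [show t ^ (m - a) = t ^ (((m - a : ℕ)):ℤ) from (zpow_natCast t _).symm, hcast,
        mul_sub, mul_one, neg_mul, neg_sub_neg, ← zpow_add₀ ht0, ← zpow_add₀ ht0,
        show ((m:ℤ) - a + -((m:ℤ) - a)) = 0 from by ring, zpow_zero,
        show (-(a:ℤ) + m) = (m:ℤ) - a from by ring]
    rw [hP2, hP1, Finset.prod_mul_distrib]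
    have hprodneg : ∏ j ∈ Finset.Icc 1 (m-1), (-(t ^ j))
        = (-1:ℝ)^(m-1) * t ^ (∑ j ∈ Finset.Icc 1 (m-1), j) := by
      calc ∏ j ∈ Finset.Icc 1 (m-1), (-(t ^ j))
          = ∏ j ∈ Finset.Icc 1 (m-1), ((-1:ℝ) * t ^ j) := by
            apply Finset.prod_congr rfl; intros; ring
        _ = (∏ _j ∈ Finset.Icc 1 (m-1), (-1:ℝ)) * ∏ j ∈ Finset.Icc 1 (m-1), t ^ j :=
            Finset.prod_mul_distrib
        _ = (-1:ℝ)^(m-1) * t ^ (∑ j ∈ Finset.Icc 1 (m-1), j) := by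
            rw [Finset.prod_const, Nat.card_Icc, Finset.prod_pow_eq_pow_sum,
              show m - 1 + 1 - 1 = m - 1 from by omega]
    rw [hprodneg]
    -- Gauss sum
    have h1 : Finset.Icc 1 (m-1) = Finset.Ico 1 m := by
      ext x; simp only [mem_Icc, mem_Ico]; omega
    have h2 : ∑ i ∈ Finset.range m, i = ∑ i ∈ Finset.Ico 1 m, i := by
      rw [Finset.range_eq_Ico, Finset.sum_eq_sum_Ico_succ_bot (by omega : 0 < m)]
      simp
    have hSn : (∑ j ∈ Finset.Icc 1 (m-1), j) * 2 = m * (m - 1) := by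
      rw [h1, ← h2, Finset.sum_range_id_mul_two]
    have hSz : ((∑ j ∈ Finset.Icc 1 (m-1), j : ℕ) : ℤ) * 2 = (m:ℤ) * ((m:ℤ) - 1) := by
      have := congrArg (Nat.cast : ℕ → ℤ) hSn
      push_cast [Nat.cast_sub hm1] at this ⊢
      linarith
    -- now pure algebra
    set D1 := ∏ l ∈ Finset.Icc 1 (m-1), ((1:ℝ) - t ^ (-(l:ℤ))) with hD1
    set D2 := ∏ l ∈ Finset.Icc 1 (N-m), ((1:ℝ) - t ^ (-(l:ℤ))) with hD2
    have hD1' : D1 ≠ 0 := hD _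
    have hD2' : D2 ≠ 0 := hD _
    have halg : (-1:ℝ) ^ (N - m) * t ^ (-(((N - m : ℕ):ℤ) * (((N - m : ℕ):ℤ) - 1) / 2)) *
        ((-1:ℝ)^(m-1) * t ^ (∑ j ∈ Finset.Icc 1 (m-1), j) * D1 * D2) / (D1 * D2)
        = (-1:ℝ) ^ (N - m) * (-1:ℝ)^(m-1) *
          (t ^ (-(((N - m : ℕ):ℤ) * (((N - m : ℕ):ℤ) - 1) / 2)) *
            t ^ ((∑ j ∈ Finset.Icc 1 (m-1), j : ℕ) : ℤ)) := by
      rw [zpow_natCast]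
      field_simp
    rw [show ((-1:ℝ)^(m-1) * t ^ (∑ j ∈ Finset.Icc 1 (m-1), j)) * D1 * D2
        = (-1:ℝ)^(m-1) * t ^ (∑ j ∈ Finset.Icc 1 (m-1), j) * D1 * D2 from by ring, halg]
    have hsign : (-1:ℝ)^(N-m) * (-1:ℝ)^(m-1) = (-1:ℝ)^(N-1) := by
      rw [← pow_add, show N - m + (m-1) = N - 1 from by omega]
    have hpow : t ^ (-(((N - m : ℕ):ℤ) * (((N - m : ℕ):ℤ) - 1) / 2)) *
          t ^ ((∑ j ∈ Finset.Icc 1 (m-1), j : ℕ) : ℤ)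
        = t ^ (-((N:ℤ) * ((N:ℤ) - 1) / 2)) * (t ^ (m:ℤ)) ^ (N - 1) := by
      rw [← zpow_natCast (t ^ (m:ℤ)) (N-1), ← zpow_mul, ← zpow_add₀ ht0, ← zpow_add₀ ht0]
      congr 1
      have hk : ((N - m : ℕ):ℤ) = (N:ℤ) - m := by
        push_cast [Nat.cast_sub hmN]; ring
      have hn1 : ((N - 1 : ℕ):ℤ) = (N:ℤ) - 1 := by
        push_cast [Nat.cast_sub (hm1.trans hmN)]; ring
      apply mul_left_cancel₀ (two_ne_zero : (2:ℤ) ≠ 0)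
      rw [mul_add, mul_add, mul_neg, mul_neg, auxHalf, auxHalf, hk, hn1]
      linear_combination hSz
    rw [hsign, hpow]
    ring
  · intro k hk hkne
    rw [mem_range] at hk
    have hmem : m ∈ (Finset.Icc 1 N).erase (N - k) := by
      rw [mem_erase, mem_Icc]; omega
    rw [Finset.prod_eq_zero hmem (by rw [← zpow_add₀ ht0]; simp)]
    simp

/-- Combination of (5.24) and (5.25) of the paper: the Vandermonde-inversion
polynomial identity equivalent to (5.23). -/
theorem stmt_15 (q : ℝ) (hq : 1 < q) (N : ℕ) (hN : 1 ≤ N) :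
    ∀ X : ℝ,
      ∑ k ∈ Finset.range N,
        (-1 : ℝ) ^ k * (-q) ^ (-((k : ℤ) * ((k : ℤ) - 1) / 2)) *
          (∏ l ∈ (Finset.Icc 1 N).erase (N - k), (1 - (-q) ^ (-(l : ℤ)) * X)) /
          ((∏ l ∈ Finset.Icc 1 (N - k - 1), (1 - (-q) ^ (-(l : ℤ)))) *
            (∏ l ∈ Finset.Icc 1 k, (1 - (-q) ^ (-(l : ℤ)))))
      = (-1 : ℝ) ^ (N - 1) * (-q) ^ (-((N : ℤ) * ((N : ℤ) - 1) / 2)) * X ^ (N - 1) := by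
  intro X
  have ht : (-q) < -1 := by linarith
  have ht0 : (-q) ≠ 0 := by intro h; nlinarith [neg_eq_zero.mp h]
  set F : Polynomial ℝ := ∑ k ∈ Finset.range N,
      Polynomial.C ((-1 : ℝ) ^ k * (-q) ^ (-((k : ℤ) * ((k : ℤ) - 1) / 2)) /
          ((∏ l ∈ Finset.Icc 1 (N - k - 1), (1 - (-q) ^ (-(l : ℤ)))) *
            (∏ l ∈ Finset.Icc 1 k, (1 - (-q) ^ (-(l : ℤ)))))) *
        ∏ l ∈ (Finset.Icc 1 N).erase (N - k), (Polynomial.C (-((-q) ^ (-(l : ℤ)))) * Polynomial.X + Polynomial.C 1) with hF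
  set G : Polynomial ℝ :=
      Polynomial.C ((-1 : ℝ) ^ (N - 1) * (-q) ^ (-((N : ℤ) * ((N : ℤ) - 1) / 2))) * Polynomial.X ^ (N - 1) with hG
  set s : Finset ℝ := (Finset.Icc 1 N).image (fun m : ℕ => (-q) ^ (m : ℤ)) with hs
  have hinj : Set.InjOn (fun m : ℕ => (-q) ^ (m : ℤ)) (Finset.Icc 1 N) := by
    intro a ha b hb h
    simp only [Finset.coe_Icc, Set.mem_Icc] at ha hb
    dsimp only at h
    by_contra hne
    have hj : (a : ℤ) - b ≠ 0 := by
      intro h'; exact hne (by omega)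
    exact auxOne ht _ hj (by rw [zpow_sub₀ ht0, h, div_self (zpow_ne_zero _ ht0)])
  have hcard : s.card = N := by
    rw [hs, Finset.card_image_of_injOn hinj, Nat.card_Icc]
    omega
  have hdegF : F.degree < N := by
    refine lt_of_le_of_lt (Polynomial.degree_sum_le _ _) ?_
    rw [Finset.sup_lt_iff (by exact_mod_cast WithBot.bot_lt_coe N)]
    intro k hk
    rw [Finset.mem_range] at hk
    refine lt_of_le_of_lt (Polynomial.degree_mul_le _ _) ?_
    have hmem : N - k ∈ Finset.Icc 1 N := by rw [Finset.mem_Icc]; omega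
    have h2 : (∏ l ∈ (Finset.Icc 1 N).erase (N - k),
        (Polynomial.C (-((-q) ^ (-(l : ℤ)))) * Polynomial.X + Polynomial.C 1)).degree ≤ ((N - 1 : ℕ) : WithBot ℕ) := by
      refine le_trans (Polynomial.degree_prod_le _ _) ?_
      refine le_trans (Finset.sum_le_sum fun l _ => Polynomial.degree_linear_le) ?_
      rw [Finset.sum_const, Finset.card_erase_of_mem hmem, Nat.card_Icc]
      rw [nsmul_eq_mul, mul_one]
      exact_mod_cast (by omega : N + 1 - 1 - 1 ≤ N - 1)
    calc (Polynomial.C _).degree + (∏ l ∈ (Finset.Icc 1 N).erase (N - k),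
            (Polynomial.C (-((-q) ^ (-(l : ℤ)))) * Polynomial.X + Polynomial.C 1)).degree
        ≤ 0 + ((N - 1 : ℕ) : WithBot ℕ) := add_le_add Polynomial.degree_C_le h2
      _ = ((N - 1 : ℕ) : WithBot ℕ) := zero_add _
      _ < (N : WithBot ℕ) := by exact_mod_cast (by omega : N - 1 < N)
  have hdegG : G.degree < N := by
    refine lt_of_le_of_lt (Polynomial.degree_C_mul_X_pow_le _ _) ?_
    exact_mod_cast (by omega : N - 1 < N)
  have heval : ∀ x ∈ s, F.eval x = G.eval x := by
    intro x hx
    obtain ⟨m, hm, rfl⟩ := Finset.mem_image.mp hx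
    rw [Finset.mem_Icc] at hm
    rw [hF, hG]
    simp only [Polynomial.eval_finset_sum, Polynomial.eval_mul, Polynomial.eval_prod,
      Polynomial.eval_add, Polynomial.eval_C, Polynomial.eval_X, Polynomial.eval_pow]
    simp only [neg_mul, neg_add_eq_sub, div_mul_eq_mul_div]
    exact auxEval ht N m hm.1 hm.2
  have key : F = G := by
    refine Polynomial.eq_of_degrees_lt_of_eval_finset_eq s ?_ ?_ heval
    · rw [hcard]; exact hdegF
    · rw [hcard]; exact hdegG
  have hXX := congrArg (Polynomial.eval X) key
  rw [hF, hG] at hXX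
  simp only [Polynomial.eval_finset_sum, Polynomial.eval_mul, Polynomial.eval_prod,
    Polynomial.eval_add, Polynomial.eval_C, Polynomial.eval_X, Polynomial.eval_pow] at hXX
  simp only [neg_mul, neg_add_eq_sub, div_mul_eq_mul_div] at hXX
  exact hXX
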